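/- arXiv:1011.3810 — 2 statements merged into one kernel-verified Lean document; each statement's English description precedes it below -/
import Mathlib

section
/- There exist constants C>0 and δ>0 such that the following holds for every n, every sequence d=(d_1,…,d_n) of nonnegative integers with M=∑d_i even, every partition [n]=L∪R with M_1(R)≥M_1(L), and d_max^4≤δ·M: if T_1 and T_2 denote respectively the number of mixed triple pairs and the number of pure triple pairs of a uniformly random restricted pairing in M(L,R,d), then E[T_1] ≤ C·d_max^4/M and E[T_2] ≤ C·d_max^4/M. -/
open Finset

namespace RandomBGraph

/-- The type of points: bucket `i` contains `d i` labelled points. -/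
abbrev Pt (n : ℕ) (d : Fin n → ℕ) := Σ i : Fin n, Fin (d i)

/-- Restricted pairings: perfect matchings (fixed-point-free involutions) of the points
in which no pair has both of its points in buckets belonging to `L`. -/
def restricted (n : ℕ) (d : Fin n → ℕ) (L : Finset (Fin n)) :
    Finset (Pt n d → Pt n d) :=
  Finset.univ.filter (fun f =>
    (∀ p, f (f p) = p) ∧ (∀ p, f p ≠ p) ∧ (∀ p : Pt n d, p.1 ∈ L → (f p).1 ∉ L))

variable {n : ℕ} {d : Fin n → ℕ}

/-- number of mixed triple pairs (each triple pair has 6 labelled representatives) -/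
def numMixedTriples (L : Finset (Fin n)) (f : Pt n d → Pt n d) : ℕ :=
  (Finset.univ.filter (fun t : Pt n d × Pt n d × Pt n d =>
    t.1 ≠ t.2.1 ∧ t.1 ≠ t.2.2 ∧ t.2.1 ≠ t.2.2 ∧
    t.1.1 = t.2.1.1 ∧ t.1.1 = t.2.2.1 ∧ t.1.1 ∈ L ∧ (f t.1).1 ∉ L ∧
    (f t.1).1 = (f t.2.1).1 ∧ (f t.1).1 = (f t.2.2).1)).card / 6

/-- number of pure triple pairs (each pure triple pair has 12 labelled representatives) -/
def numPureTriples (L : Finset (Fin n)) (f : Pt n d → Pt n d) : ℕ :=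
  (Finset.univ.filter (fun t : Pt n d × Pt n d × Pt n d =>
    t.1 ≠ t.2.1 ∧ t.1 ≠ t.2.2 ∧ t.2.1 ≠ t.2.2 ∧
    t.1.1 = t.2.1.1 ∧ t.1.1 = t.2.2.1 ∧ t.1.1 ∉ L ∧ (f t.1).1 ∉ L ∧
    (f t.1).1 = (f t.2.1).1 ∧ (f t.1).1 = (f t.2.2).1 ∧ (f t.1).1 ≠ t.1.1)).card / 12

/-- expectation with respect to the uniform distribution on a finite set -/
noncomputable def expec {α : Type*} (s : Finset α) (X : α → ℕ) : ℝ :=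
  (∑ f ∈ s, (X f : ℝ)) / s.card

def M (n : ℕ) (d : Fin n → ℕ) : ℕ := ∑ i, d i

def M1 (d : Fin n → ℕ) (S : Finset (Fin n)) : ℕ := ∑ i ∈ S, d i

def dmax (d : Fin n → ℕ) : ℕ := Finset.univ.sup d



set_option maxHeartbeats 3200000

lemma pt_ext {x y : Pt n d} (h1 : x.1 = y.1) (h2 : x.2.val = y.2.val) : x = y := by
  cases x; cases y; cases h1; congr; exact Fin.ext h2

lemma conj_mem (L : Finset (Fin n)) (f : Pt n d → Pt n d)
    (hf : f ∈ restricted n d L) (a b : Pt n d) (ha : a.1 ∉ L) (hb : b.1 ∉ L) :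
    (fun x => Equiv.swap a b (f (Equiv.swap a b x))) ∈ restricted n d L := by
  simp only [restricted, mem_filter, mem_univ, true_and] at hf ⊢
  obtain ⟨h1, h2, h3⟩ := hf
  refine ⟨fun p => by simp [Equiv.swap_apply_self, h1], fun p hp => ?_, fun p hp => ?_⟩
  · apply h2 (Equiv.swap a b p)
    have := congrArg (Equiv.swap a b) hp
    simpa [Equiv.swap_apply_self] using this
  · have hpa : p ≠ a := fun h => ha (h ▸ hp)
    have hpb : p ≠ b := fun h => hb (h ▸ hp)
    rw [Equiv.swap_apply_of_ne_of_ne hpa hpb]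
    by_cases h1' : f p = a
    · rw [h1', Equiv.swap_apply_left]; exact hb
    · by_cases h2' : f p = b
      · rw [h2', Equiv.swap_apply_right]; exact ha
      · rw [Equiv.swap_apply_of_ne_of_ne h1' h2']; exact h3 p hp

/-- the switching/injection counting step -/
lemma step (L : Finset (Fin n)) (p q : Pt n d) (hq : q.1 ∉ L) (hpq : p ≠ q)
    (F : Finset (Pt n d)) (hpF : p ∈ F)
    (P : (Pt n d → Pt n d) → Prop) [DecidablePred P]
    (hP : ∀ f (r : Pt n d), r.1 ∉ L → r ∉ F → P f →
      P (fun x => Equiv.swap q r (f (Equiv.swap q r x)))) :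
    ((restricted n d L).filter (fun f => P f ∧ f p = q)).card *
      ((univ.filter (fun x : Pt n d => x.1 ∉ L)).card - F.card)
      ≤ ((restricted n d L).filter P).card := by
  classical
  set A := (restricted n d L).filter (fun f => P f ∧ f p = q) with hA
  set B := (restricted n d L).filter P with hB
  set W := (univ.filter (fun x : Pt n d => x.1 ∉ L)) \ F with hW
  have hWcard : (univ.filter (fun x : Pt n d => x.1 ∉ L)).card - F.card ≤ W.card :=
    le_card_sdiff _ _
  have key : (A ×ˢ W).card ≤ B.card := by
    apply Finset.card_le_card_of_injOn
      (fun fr => fun x => Equiv.swap q fr.2 (fr.1 (Equiv.swap q fr.2 x)))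
    · rintro ⟨f, r⟩ hfr
      rw [mem_coe, mem_product] at hfr
      obtain ⟨hfA, hrW⟩ := hfr
      rw [hW, mem_sdiff, mem_filter] at hrW
      rw [hA, mem_filter] at hfA
      rw [hB, mem_coe, mem_filter]
      exact ⟨conj_mem L f hfA.1 q r hq hrW.1.2,
        hP f r hrW.1.2 hrW.2 hfA.2.1⟩
    · rintro ⟨f1, r1⟩ h1 ⟨f2, r2⟩ h2 heq
      rw [coe_product] at h1 h2
      obtain ⟨hf1, hr1⟩ := h1
      obtain ⟨hf2, hr2⟩ := h2
      simp only [mem_coe, hA, mem_filter] at hf1 hf2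
      simp only [mem_coe, hW, mem_sdiff] at hr1 hr2
      have hval : ∀ (f : Pt n d → Pt n d) (r : Pt n d), f ∈ restricted n d L → f p = q →
          r ∉ F → Equiv.swap q r (f (Equiv.swap q r p)) = r := by
        intro f r hf hfp hrF
        have hpr : p ≠ r := fun h => hrF (h ▸ hpF)
        rw [Equiv.swap_apply_of_ne_of_ne hpq hpr, hfp, Equiv.swap_apply_left]
      have hr : r1 = r2 := by
        have e1 := hval f1 r1 hf1.1 hf1.2.2 hr1.2
        have e2 := hval f2 r2 hf2.1 hf2.2.2 hr2.2
        rw [← e1, ← e2]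
        exact congrFun heq p
      subst hr
      have hf : f1 = f2 := by
        funext x
        have := congrFun heq (Equiv.swap q r1 x)
        simp only [Equiv.swap_apply_self] at this
        have := congrArg (Equiv.swap q r1) this
        simpa [Equiv.swap_apply_self] using this
      rw [hf]
  calc A.card * ((univ.filter (fun x : Pt n d => x.1 ∉ L)).card - F.card)
      ≤ A.card * W.card := Nat.mul_le_mul_left _ hWcard
    _ = (A ×ˢ W).card := (card_product A W).symm
    _ ≤ B.card := key

/-- chained bound for a triple of forced pairs -/
lemma triple_bound (L : Finset (Fin n)) (p1 p2 p3 q1 q2 q3 : Pt n d)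
    (hp12 : p1 ≠ p2) (hp13 : p1 ≠ p3) (hp23 : p2 ≠ p3)
    (hq12 : q1 ≠ q2) (hq13 : q1 ≠ q3) (hq23 : q2 ≠ q3)
    (hqL : q1.1 ∉ L)
    (hb2 : q2.1 = q1.1) (hb3 : q3.1 = q1.1)
    (ha2 : p2.1 = p1.1) (ha3 : p3.1 = p1.1)
    (hij : q1.1 ≠ p1.1) :
    ((restricted n d L).filter
        (fun f => f p1 = q1 ∧ f p2 = q2 ∧ f p3 = q3)).card *
      ((univ.filter (fun x : Pt n d => x.1 ∉ L)).card - 5) ^ 3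
      ≤ (restricted n d L).card := by
  classical
  have hpq : ∀ (a b : Pt n d), a.1 = p1.1 → b.1 = q1.1 → a ≠ b := by
    intro a b hha hhb h
    exact hij (by rw [← hha, ← hhb, h])
  have hq2L : q2.1 ∉ L := hb2 ▸ hqL
  have hq3L : q3.1 ∉ L := hb3 ▸ hqL
  have s1 := step L p1 q1 hqL (hpq p1 q1 rfl rfl) {p1} (mem_singleton_self _)
    (fun _ => True) (fun _ _ _ _ _ => trivial)
  have s2 := step L p2 q2 hq2L (hpq p2 q2 ha2 hb2) {p1, q1, p2}
    (by simp) (fun f => f p1 = q1)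
    (by
      intro f r hrL hrF hPf
      have h1 : p1 ≠ q2 := hpq p1 q2 rfl hb2
      have h2 : p1 ≠ r := fun h => hrF (by simp [← h])
      have h4 : q1 ≠ r := fun h => hrF (by simp [← h])
      simp only
      rw [Equiv.swap_apply_of_ne_of_ne h1 h2, hPf,
        Equiv.swap_apply_of_ne_of_ne hq12 h4])
  have s3 := step L p3 q3 hq3L (hpq p3 q3 ha3 hb3) {p1, q1, p2, q2, p3}
    (by simp) (fun f => f p1 = q1 ∧ f p2 = q2)
    (by
      intro f r hrL hrF hPf
      have h2 : p1 ≠ r := fun h => hrF (by simp [← h])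
      have h4 : q1 ≠ r := fun h => hrF (by simp [← h])
      have h5 : p2 ≠ r := fun h => hrF (by simp [← h])
      have h6 : q2 ≠ r := fun h => hrF (by simp [← h])
      constructor
      · simp only
        rw [Equiv.swap_apply_of_ne_of_ne (hpq p1 q3 rfl hb3) h2, hPf.1,
          Equiv.swap_apply_of_ne_of_ne hq13 h4]
      · simp only
        rw [Equiv.swap_apply_of_ne_of_ne (hpq p2 q3 ha2 hb3) h5, hPf.2,
          Equiv.swap_apply_of_ne_of_ne hq23 h6])
  have c2 : ({p1, q1, p2} : Finset (Pt n d)).card ≤ 5 :=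
    le_trans (card_insert_le _ _) (Nat.succ_le_succ
      (le_trans (card_insert_le _ _) (Nat.succ_le_succ (by simp : ({p1}:Finset (Pt n d)).card ≤ 3))))
  have c1 : ({p1} : Finset (Pt n d)).card ≤ 5 := by simp
  have c3 : ({p1, q1, p2, q2, p3} : Finset (Pt n d)).card ≤ 5 :=
    le_trans (card_insert_le _ _) (Nat.succ_le_succ
      (le_trans (card_insert_le _ _) (Nat.succ_le_succ
        (le_trans (card_insert_le _ _) (Nat.succ_le_succ
          (le_trans (card_insert_le _ _) (Nat.succ_le_succ (by simp))))))))
  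
  have m1 : (univ.filter (fun x : Pt n d => x.1 ∉ L)).card - 5 ≤
      (univ.filter (fun x : Pt n d => x.1 ∉ L)).card - ({p1} : Finset (Pt n d)).card :=
    Nat.sub_le_sub_left c1 _
  have m2 : (univ.filter (fun x : Pt n d => x.1 ∉ L)).card - 5 ≤
      (univ.filter (fun x : Pt n d => x.1 ∉ L)).card - ({p1, q1, p2} : Finset (Pt n d)).card :=
    Nat.sub_le_sub_left c2 _
  have m3 : (univ.filter (fun x : Pt n d => x.1 ∉ L)).card - 5 ≤
      (univ.filter (fun x : Pt n d => x.1 ∉ L)).card -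
        ({p1, q1, p2, q2, p3} : Finset (Pt n d)).card :=
    Nat.sub_le_sub_left c3 _
  beta_reduce at s1 s2 s3
  have b3 : ((restricted n d L).filter (fun f => f p1 = q1 ∧ f p2 = q2 ∧ f p3 = q3)).card *
      ((univ.filter (fun x : Pt n d => x.1 ∉ L)).card - 5)
      ≤ ((restricted n d L).filter (fun f => f p1 = q1 ∧ f p2 = q2)).card := by
    refine le_trans (Nat.mul_le_mul ?_ m3) s3
    apply card_le_card; intro f hf; simp only [mem_filter] at hf ⊢; tauto
  have b2 : ((restricted n d L).filter (fun f => f p1 = q1 ∧ f p2 = q2)).card *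
      ((univ.filter (fun x : Pt n d => x.1 ∉ L)).card - 5)
      ≤ ((restricted n d L).filter (fun f => f p1 = q1)).card := by
    refine le_trans (Nat.mul_le_mul ?_ m2) s2
    apply card_le_card; intro f hf; simp only [mem_filter] at hf ⊢; tauto
  have b1 : ((restricted n d L).filter (fun f => f p1 = q1)).card *
      ((univ.filter (fun x : Pt n d => x.1 ∉ L)).card - 5)
      ≤ (restricted n d L).card := by
    refine le_trans (le_trans (Nat.mul_le_mul ?_ m1) s1) (card_filter_le _ _)
    apply card_le_card; intro f hf; simp only [mem_filter] at hf ⊢; tauto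
  calc ((restricted n d L).filter (fun f => f p1 = q1 ∧ f p2 = q2 ∧ f p3 = q3)).card *
        ((univ.filter (fun x : Pt n d => x.1 ∉ L)).card - 5) ^ 3
      = ((restricted n d L).filter (fun f => f p1 = q1 ∧ f p2 = q2 ∧ f p3 = q3)).card *
        ((univ.filter (fun x : Pt n d => x.1 ∉ L)).card - 5) *
        ((univ.filter (fun x : Pt n d => x.1 ∉ L)).card - 5) *
        ((univ.filter (fun x : Pt n d => x.1 ∉ L)).card - 5) := by ring
    _ ≤ ((restricted n d L).filter (fun f => f p1 = q1 ∧ f p2 = q2)).card *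
        ((univ.filter (fun x : Pt n d => x.1 ∉ L)).card - 5) *
        ((univ.filter (fun x : Pt n d => x.1 ∉ L)).card - 5) :=
        Nat.mul_le_mul_right _ (Nat.mul_le_mul_right _ b3)
    _ ≤ ((restricted n d L).filter (fun f => f p1 = q1)).card *
        ((univ.filter (fun x : Pt n d => x.1 ∉ L)).card - 5) :=
        Nat.mul_le_mul_right _ b2
    _ ≤ (restricted n d L).card := b1

lemma card_pt : Fintype.card (Pt n d) = M n d := by
  simp [M, Fintype.card_sigma]

lemma tripleSet_card (P : Pt n d × Pt n d × Pt n d → Prop) [DecidablePred P]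
    (hP : ∀ t, P t → t.2.1.1 = t.1.1 ∧ t.2.2.1 = t.1.1) :
    (univ.filter P).card ≤ M n d * dmax d ^ 2 := by
  classical
  have hle : ∀ (x : Pt n d), (x.2 : ℕ) < dmax d := by
    intro x
    exact lt_of_lt_of_le x.2.isLt (Finset.le_sup (mem_univ x.1))
  have key : (univ.filter P).card ≤
      Fintype.card (Pt n d × Fin (dmax d) × Fin (dmax d)) := by
    apply Finset.card_le_card_of_injOn
      (fun t => (t.1, ⟨(t.2.1.2 : ℕ), hle t.2.1⟩, ⟨(t.2.2.2 : ℕ), hle t.2.2⟩))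
    · intro t _; exact mem_univ _
    · intro t ht t' ht' heq
      simp only [coe_filter, Set.mem_setOf_eq] at ht ht'
      obtain ⟨c1, c2⟩ := hP t ht.2
      obtain ⟨c1', c2'⟩ := hP t' ht'.2
      simp only [Prod.mk.injEq, Fin.mk.injEq] at heq
      obtain ⟨e1, e2, e3⟩ := heq
      refine Prod.ext e1 (Prod.ext ?_ ?_)
      · exact pt_ext (by rw [c1, c1', e1]) e2
      · exact pt_ext (by rw [c2, c2', e1]) e3
  calc (univ.filter P).card ≤ Fintype.card (Pt n d × Fin (dmax d) × Fin (dmax d)) := key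
    _ = M n d * dmax d ^ 2 := by
        rw [Fintype.card_prod, Fintype.card_prod, Fintype.card_fin, card_pt]; ring

lemma sum_swap_card {α β : Type*} [Fintype β] [DecidableEq α]
    (s : Finset α) (P : β → α → Prop) [∀ t f, Decidable (P t f)] :
    ∑ f ∈ s, (univ.filter (fun t => P t f)).card
      = ∑ t : β, (s.filter (fun f => P t f)).card := by
  simp only [card_filter]
  rw [Finset.sum_comm]

/-- master counting bound -/
lemma master (L : Finset (Fin n))
    (hMR : M n d ≤ 2 * (univ.filter (fun x : Pt n d => x.1 ∉ L)).card)
    (hM : 100 ≤ M n d)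
    (cond : (Pt n d × Pt n d × Pt n d) → (Pt n d → Pt n d) → Prop)
    [∀ t f, Decidable (cond t f)]
    (hcond : ∀ t f, f ∈ restricted n d L → cond t f →
      t.1 ≠ t.2.1 ∧ t.1 ≠ t.2.2 ∧ t.2.1 ≠ t.2.2 ∧
      t.1.1 = t.2.1.1 ∧ t.1.1 = t.2.2.1 ∧
      (f t.1).1 ∉ L ∧ (f t.1).1 = (f t.2.1).1 ∧ (f t.1).1 = (f t.2.2).1 ∧
      (f t.1).1 ≠ t.1.1) :
    (∑ f ∈ restricted n d L, (univ.filter (fun t => cond t f)).card) * (M n d) ^ 3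
      ≤ 64 * (restricted n d L).card * (M n d) ^ 2 * (dmax d) ^ 4 := by
  classical
  set S := restricted n d L with hS
  set RC := (univ.filter (fun x : Pt n d => x.1 ∉ L)).card with hRC
  -- injectivity of elements of S
  have Sinj : ∀ f ∈ S, ∀ a b : Pt n d, f a = f b → a = b := by
    intro f hf a b hab
    rw [hS, restricted, mem_filter] at hf
    have h1 := hf.2.1
    calc a = f (f a) := (h1 a).symm
      _ = f (f b) := by rw [hab]
      _ = b := h1 b
  -- M ≤ 4 * (RC - 5)
  have hM4 : M n d ≤ 4 * (RC - 5) := by omega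
  have hM3 : (M n d) ^ 3 ≤ 64 * (RC - 5) ^ 3 := by
    calc (M n d) ^ 3 ≤ (4 * (RC - 5)) ^ 3 := Nat.pow_le_pow_left hM4 3
      _ = 64 * (RC - 5) ^ 3 := by ring
  -- the per-t bound
  have per_t : ∀ t : Pt n d × Pt n d × Pt n d,
      (S.filter (fun f => cond t f)).card * (M n d) ^ 3 ≤
      (if t.1 ≠ t.2.1 ∧ t.1 ≠ t.2.2 ∧ t.2.1 ≠ t.2.2 ∧
          t.1.1 = t.2.1.1 ∧ t.1.1 = t.2.2.1 then
        64 * S.card * (M n d * dmax d ^ 2) else 0) := by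
    intro t
    by_cases hPt : t.1 ≠ t.2.1 ∧ t.1 ≠ t.2.2 ∧ t.2.1 ≠ t.2.2 ∧
        t.1.1 = t.2.1.1 ∧ t.1.1 = t.2.2.1
    · rw [if_pos hPt]
      -- fiberwise decomposition along (f t.1, f t.2.1, f t.2.2)
      set Qs : Finset (Pt n d × Pt n d × Pt n d) :=
        univ.filter (fun b => b.1.1 ∉ L ∧ b.2.1.1 = b.1.1 ∧ b.2.2.1 = b.1.1 ∧
          b.1 ≠ b.2.1 ∧ b.1 ≠ b.2.2 ∧ b.2.1 ≠ b.2.2 ∧ b.1.1 ≠ t.1.1) with hQs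
      have hfib : (S.filter (fun f => cond t f)).card =
          ∑ b ∈ Qs, ((S.filter (fun f => cond t f)).filter
            (fun f => (f t.1, f t.2.1, f t.2.2) = b)).card := by
        apply card_eq_sum_card_fiberwise
        intro f hf
        rw [mem_coe, mem_filter] at hf
        obtain ⟨hfS, hfc⟩ := hf
        obtain ⟨d1, d2, d3, e1, e2, hL, i1, i2, hne⟩ := hcond t f hfS hfc
        rw [hQs, mem_coe, mem_filter]
        refine ⟨mem_univ _, hL, i1.symm, i2.symm, ?_, ?_, ?_, hne⟩
        · intro h; exact d1 (Sinj f hfS _ _ h)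
        · intro h; exact d2 (Sinj f hfS _ _ h)
        · intro h; exact d3 (Sinj f hfS _ _ h)
      have fib_bound : ∀ b ∈ Qs,
          ((S.filter (fun f => cond t f)).filter
            (fun f => (f t.1, f t.2.1, f t.2.2) = b)).card * (M n d) ^ 3 ≤ 64 * S.card := by
        intro b hb
        rw [hQs, mem_filter] at hb
        obtain ⟨-, hbL, hbe1, hbe2, hbd1, hbd2, hbd3, hbij⟩ := hb
        have sub : ((S.filter (fun f => cond t f)).filter
            (fun f => (f t.1, f t.2.1, f t.2.2) = b)) ⊆
            S.filter (fun f => f t.1 = b.1 ∧ f t.2.1 = b.2.1 ∧ f t.2.2 = b.2.2) := by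
          intro f hf
          simp only [mem_filter] at hf ⊢
          obtain ⟨⟨hfS, -⟩, hfb⟩ := hf
          exact ⟨hfS, congrArg Prod.fst hfb, congrArg (fun z => z.2.1) hfb,
            congrArg (fun z => z.2.2) hfb⟩
        have tb := triple_bound L t.1 t.2.1 t.2.2 b.1 b.2.1 b.2.2
          hPt.1 hPt.2.1 hPt.2.2.1 hbd1 hbd2 hbd3 hbL hbe1 hbe2
          hPt.2.2.2.1.symm hPt.2.2.2.2.symm hbij
        calc ((S.filter (fun f => cond t f)).filter
              (fun f => (f t.1, f t.2.1, f t.2.2) = b)).card * (M n d) ^ 3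
            ≤ (S.filter (fun f => f t.1 = b.1 ∧ f t.2.1 = b.2.1 ∧ f t.2.2 = b.2.2)).card
              * (64 * (RC - 5) ^ 3) := Nat.mul_le_mul (card_le_card sub) hM3
          _ = 64 * ((S.filter (fun f => f t.1 = b.1 ∧ f t.2.1 = b.2.1 ∧ f t.2.2 = b.2.2)).card
              * (RC - 5) ^ 3) := by ring
          _ ≤ 64 * S.card := Nat.mul_le_mul_left _ tb
      have hQcard : Qs.card ≤ M n d * dmax d ^ 2 := by
        apply tripleSet_card
        intro b hbP
        exact ⟨hbP.2.1, hbP.2.2.1⟩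
      calc (S.filter (fun f => cond t f)).card * (M n d) ^ 3
          = ∑ b ∈ Qs, ((S.filter (fun f => cond t f)).filter
              (fun f => (f t.1, f t.2.1, f t.2.2) = b)).card * (M n d) ^ 3 := by
            rw [hfib, Finset.sum_mul]
        _ ≤ ∑ _b ∈ Qs, 64 * S.card := Finset.sum_le_sum fib_bound
        _ = Qs.card * (64 * S.card) := by rw [Finset.sum_const, smul_eq_mul]
        _ ≤ (M n d * dmax d ^ 2) * (64 * S.card) := Nat.mul_le_mul_right _ hQcard
        _ = 64 * S.card * (M n d * dmax d ^ 2) := by ring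
    · rw [if_neg hPt]
      have : (S.filter (fun f => cond t f)) = ∅ := by
        apply filter_eq_empty_iff.mpr
        intro f hfS hfc
        obtain ⟨d1, d2, d3, e1, e2, -⟩ := hcond t f hfS hfc
        exact hPt ⟨d1, d2, d3, e1, e2⟩
      rw [this]; simp
  -- assemble
  have swap := sum_swap_card S cond
  calc (∑ f ∈ S, (univ.filter (fun t => cond t f)).card) * (M n d) ^ 3
      = ∑ t : Pt n d × Pt n d × Pt n d, (S.filter (fun f => cond t f)).card * (M n d) ^ 3 := by
        rw [swap, Finset.sum_mul]
    _ ≤ ∑ t : Pt n d × Pt n d × Pt n d,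
        (if t.1 ≠ t.2.1 ∧ t.1 ≠ t.2.2 ∧ t.2.1 ≠ t.2.2 ∧
            t.1.1 = t.2.1.1 ∧ t.1.1 = t.2.2.1 then
          64 * S.card * (M n d * dmax d ^ 2) else 0) := Finset.sum_le_sum (fun t _ => per_t t)
    _ = (univ.filter (fun t : Pt n d × Pt n d × Pt n d =>
          t.1 ≠ t.2.1 ∧ t.1 ≠ t.2.2 ∧ t.2.1 ≠ t.2.2 ∧
          t.1.1 = t.2.1.1 ∧ t.1.1 = t.2.2.1)).card * (64 * S.card * (M n d * dmax d ^ 2)) := by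
        rw [← Finset.sum_filter, Finset.sum_const, smul_eq_mul]
    _ ≤ (M n d * dmax d ^ 2) * (64 * S.card * (M n d * dmax d ^ 2)) := by
        apply Nat.mul_le_mul_right
        apply tripleSet_card
        intro b hbP
        exact ⟨hbP.2.2.2.1.symm, hbP.2.2.2.2.symm⟩
    _ = 64 * S.card * (M n d) ^ 2 * (dmax d) ^ 4 := by ring

lemma final_real {α : Type*} (S : Finset α) (A : α → ℕ) (k : ℕ) (Mv D : ℕ) (hM : 0 < Mv)
    (key : (∑ f ∈ S, A f) * Mv ^ 3 ≤ 64 * S.card * Mv ^ 2 * D ^ 4) :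
    (∑ f ∈ S, ((A f / k : ℕ) : ℝ)) / S.card ≤ 64 * (D : ℝ) ^ 4 / (Mv : ℝ) := by
  have hMR : (0:ℝ) < (Mv:ℝ) := by exact_mod_cast hM
  rcases Nat.eq_zero_or_pos S.card with hN | hN
  · rw [hN]
    simp only [Nat.cast_zero, div_zero]
    positivity
  · have hNR : (0:ℝ) < (S.card:ℝ) := by exact_mod_cast hN
    have h1 : (∑ f ∈ S, ((A f / k : ℕ) : ℝ)) ≤ ((∑ f ∈ S, A f : ℕ) : ℝ) := by
      rw [Nat.cast_sum]
      apply Finset.sum_le_sum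
      intro f _
      exact_mod_cast Nat.div_le_self (A f) k
    have h2 : ((∑ f ∈ S, A f : ℕ) : ℝ) ≤ 64 * (S.card : ℝ) * (D:ℝ) ^ 4 / (Mv : ℝ) := by
      rw [le_div_iff₀ hMR]
      have keyR : ((∑ f ∈ S, A f : ℕ) : ℝ) * (Mv:ℝ) ^ 3 ≤
          64 * (S.card:ℝ) * (Mv:ℝ) ^ 2 * (D:ℝ) ^ 4 := by exact_mod_cast key
      have hMv2 : (0:ℝ) < (Mv:ℝ) ^ 2 := by positivity
      nlinarith [keyR]
    rw [div_le_iff₀ hNR]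
    calc (∑ f ∈ S, ((A f / k : ℕ) : ℝ)) ≤ 64 * (S.card : ℝ) * (D:ℝ) ^ 4 / (Mv : ℝ) :=
          le_trans h1 h2
      _ = 64 * (D:ℝ) ^ 4 / (Mv:ℝ) * (S.card : ℝ) := by field_simp

/-- **Lemma 1**: `E[T₁] = O(d_max⁴/M)` and `E[T₂] = O(d_max⁴/M)`. -/
theorem expected_triple_pairs :
    ∃ C : ℝ, 0 < C ∧ ∃ δ : ℝ, 0 < δ ∧
      ∀ (n : ℕ) (d : Fin n → ℕ) (L R : Finset (Fin n)),
        Disjoint L R → L ∪ R = Finset.univ →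
        Even (M n d) →
        M1 d L ≤ M1 d R →
        (dmax d : ℝ) ^ 4 ≤ δ * (M n d : ℝ) →
        expec (restricted n d L) (numMixedTriples L) ≤ C * (dmax d : ℝ) ^ 4 / (M n d : ℝ) ∧
        expec (restricted n d L) (numPureTriples L) ≤ C * (dmax d : ℝ) ^ 4 / (M n d : ℝ) := by
  classical
  refine ⟨64, by norm_num, 1/100, by norm_num, ?_⟩
  intro n d L R hdis hun heven hLR hδ
  rcases Nat.eq_zero_or_pos (dmax d) with hD | hD
  · -- degenerate case: no points at all
    have hPt : IsEmpty (Pt n d) := by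
      constructor
      intro x
      have h1 : d x.1 ≤ dmax d := Finset.le_sup (mem_univ x.1)
      have := x.2.isLt
      omega
    have hzero : ∀ (X : Pt n d → Pt n d → Prop), True := fun _ => trivial
    have e1 : expec (restricted n d L) (numMixedTriples L) = 0 := by
      unfold expec
      rw [Finset.sum_eq_zero, zero_div]
      intro f _
      have : (univ : Finset (Pt n d × Pt n d × Pt n d)) = ∅ := by
        apply univ_eq_empty
      unfold numMixedTriples
      rw [this]
      simp
    have e2 : expec (restricted n d L) (numPureTriples L) = 0 := by
      unfold expec
      rw [Finset.sum_eq_zero, zero_div]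
      intro f _
      have : (univ : Finset (Pt n d × Pt n d × Pt n d)) = ∅ := by
        apply univ_eq_empty
      unfold numPureTriples
      rw [this]
      simp
    rw [e1, e2, hD]
    norm_num
  · -- main case
    have hd1 : 1 ≤ dmax d := hD
    have h100 : 100 * dmax d ^ 4 ≤ M n d := by
      have hc : (100:ℝ) * ((dmax d : ℝ)) ^ 4 ≤ (M n d : ℝ) := by linarith
      exact_mod_cast hc
    have hM : 100 ≤ M n d := by
      have : 1 ≤ dmax d ^ 4 := Nat.one_le_pow _ _ hd1
      nlinarith
    have hMpos : 0 < M n d := by omega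
    -- points on the R side
    have hRiff : ∀ i : Fin n, i ∉ L ↔ i ∈ R := by
      intro i
      constructor
      · intro h
        have hi : i ∈ L ∪ R := by rw [hun]; exact mem_univ i
        rcases mem_union.mp hi with h' | h'
        · exact absurd h' h
        · exact h'
      · intro h hL
        exact (Finset.disjoint_left.mp hdis) hL h
    have hRC : (univ.filter (fun x : Pt n d => x.1 ∉ L)).card = M1 d R := by
      have hset : (univ.filter (fun x : Pt n d => x.1 ∉ L))
          = R.sigma (fun i => (univ : Finset (Fin (d i)))) := by
        ext x
        simp only [mem_filter, mem_univ, true_and, Finset.mem_sigma, and_true]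
        exact hRiff x.1
      rw [hset, Finset.card_sigma]
      simp [M1]
    have hMsplit : M n d = M1 d L + M1 d R := by
      rw [M, M1, M1, ← Finset.sum_union hdis, hun]
    have hMR : M n d ≤ 2 * (univ.filter (fun x : Pt n d => x.1 ∉ L)).card := by
      rw [hRC]; omega
    constructor
    · -- mixed triples
      have key := master L hMR hM
        (fun t f => t.1 ≠ t.2.1 ∧ t.1 ≠ t.2.2 ∧ t.2.1 ≠ t.2.2 ∧
          t.1.1 = t.2.1.1 ∧ t.1.1 = t.2.2.1 ∧ t.1.1 ∈ L ∧ (f t.1).1 ∉ L ∧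
          (f t.1).1 = (f t.2.1).1 ∧ (f t.1).1 = (f t.2.2).1)
        (by
          intro t f hfS hc
          obtain ⟨d1, d2, d3, e1, e2, hL, hfL, i1, i2⟩ := hc
          exact ⟨d1, d2, d3, e1, e2, hfL, i1, i2, fun h => hfL (h ▸ hL)⟩)
      exact final_real (restricted n d L) _ 6 (M n d) (dmax d) hMpos key
    · -- pure triples
      have key := master L hMR hM
        (fun t f => t.1 ≠ t.2.1 ∧ t.1 ≠ t.2.2 ∧ t.2.1 ≠ t.2.2 ∧
          t.1.1 = t.2.1.1 ∧ t.1.1 = t.2.2.1 ∧ t.1.1 ∉ L ∧ (f t.1).1 ∉ L ∧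
          (f t.1).1 = (f t.2.1).1 ∧ (f t.1).1 = (f t.2.2).1 ∧ (f t.1).1 ≠ t.1.1)
        (by
          intro t f hfS hc
          obtain ⟨d1, d2, d3, e1, e2, hL, hfL, i1, i2, hne⟩ := hc
          exact ⟨d1, d2, d3, e1, e2, hfL, i1, i2, hne⟩)
      exact final_real (restricted n d L) _ 12 (M n d) (dmax d) hMpos key

end RandomBGraph
end

section
/- Let d=(d_1,…,d_n) be nonnegative integers with M=∑d_i even and let [n]=L∪R be a partition with M_1(R)≥M_1(L). Then the number of restricted pairings equals |M(L,R,d)| = [M_1(R)]_{M_1(L)} · (M_1(R)−M_1(L))! / (2^t · t!), where t=(M_1(R)−M_1(L))/2 and [x]_k denotes the falling factorial x(x−1)⋯(x−k+1). -/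
open Finset

namespace RandomBGraph

variable {n : ℕ}

/-- the number `t = (M₁(R) - M₁(L))/2` of pure pairs -/
def tP (d : Fin n → ℕ) (L R : Finset (Fin n)) : ℕ := (M1 d R - M1 d L) / 2


def fpfInv (α : Type*) [Fintype α] [DecidableEq α] : Finset (α → α) :=
  Finset.univ.filter (fun f => (∀ p, f (f p) = p) ∧ ∀ p, f p ≠ p)

def fpfCount : ℕ → ℕ
  | 0 => 1
  | 1 => 0
  | (m+2) => (m+1) * fpfCount m

lemma fiber_step {α : Type} [Fintype α] [DecidableEq α] (x0 y : α) (hyx : y ≠ x0) :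
    ((fpfInv α).filter (fun f => f x0 = y)).card
      = (fpfInv {z : α // z ≠ x0 ∧ z ≠ y}).card := by
  apply Finset.card_bij'
    (i := fun f hf => fun z : {z : α // z ≠ x0 ∧ z ≠ y} =>
      (⟨f z.1, by
        simp only [fpfInv, Finset.filter_filter, Finset.mem_filter, Finset.mem_univ,
          true_and] at hf
        obtain ⟨⟨hinv, hfpf⟩, hx0⟩ := hf
        constructor
        · intro h
          have := congrArg f h
          rw [hinv, hx0] at this
          exact z.2.2 this
        · intro h
          have := congrArg f (h.trans hx0.symm)
          rw [hinv, hinv] at this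
          exact z.2.1 this⟩ :
      {z : α // z ≠ x0 ∧ z ≠ y}))
    (j := fun h hh => fun z : α =>
      if hz : z = x0 then y else if hzy : z = y then x0 else (h ⟨z, hz, hzy⟩).1)
  case hi =>
    intro f hf
    simp only [fpfInv, Finset.filter_filter, Finset.mem_filter, Finset.mem_univ,
      true_and] at hf
    obtain ⟨⟨hinv, hfpf⟩, hx0⟩ := hf
    simp only [fpfInv, Finset.mem_filter, Finset.mem_univ, true_and]
    refine ⟨fun p => Subtype.ext (hinv p.1), fun p hp => hfpf p.1 (congrArg Subtype.val hp)⟩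
  case hj =>
    intro h hh
    simp only [fpfInv, Finset.mem_filter, Finset.mem_univ, true_and] at hh
    obtain ⟨hinv, hfpf⟩ := hh
    simp only [fpfInv, Finset.filter_filter, Finset.mem_filter, Finset.mem_univ, true_and]
    refine ⟨⟨?_, ?_⟩, ?_⟩
    · intro p
      split_ifs with h1 h2 h3 h4 h5 h6 h7 <;>
        first
          | exact absurd rfl h2
          | exact absurd rfl h4
          | exact absurd h6 (h ⟨p, h1, h3⟩).2.1
          | exact absurd h7 (h ⟨p, h1, h3⟩).2.2
          | exact congrArg Subtype.val (hinv ⟨p, h1, h3⟩)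
          | simp_all
    · intro p
      split_ifs with h1 h2
      · exact fun hc => hyx (hc.trans h1)
      · exact fun hc => hyx (hc.trans h2).symm
      · exact fun hc => hfpf ⟨p, h1, h2⟩ (Subtype.ext hc)
    · exact dif_pos trivial
  case left_inv =>
    intro f hf
    simp only [fpfInv, Finset.filter_filter, Finset.mem_filter, Finset.mem_univ,
      true_and] at hf
    obtain ⟨⟨hinv, hfpf⟩, hx0⟩ := hf
    funext z
    show (if hz : z = x0 then y else if hzy : z = y then x0 else f z) = f z
    split_ifs with h1 h2
    · rw [h1]; exact hx0.symm
    · subst h2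
      have h5 := congrArg f hx0
      rw [hinv] at h5
      exact h5
    · rfl
  case right_inv =>
    intro h hh
    funext z
    apply Subtype.ext
    show (if hz : (z : α) = x0 then y else if hzy : (z : α) = y then x0
      else (h ⟨z.1, hz, hzy⟩).1) = (h z).1
    split_ifs with h1 h2
    · exact absurd h1 z.2.1
    · exact absurd h2 z.2.2
    · rfl

lemma card_fpfInv : ∀ (m : ℕ) (α : Type) [Fintype α] [DecidableEq α],
    Fintype.card α = m → (fpfInv α).card = fpfCount m := by
  intro m
  induction m using Nat.strong_induction_on with
  | _ m ih =>
    intro α _ _ hcard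
    match m, hcard with
    | 0, hcard =>
      haveI : IsEmpty α := Fintype.card_eq_zero_iff.mp hcard
      have h1 : (fpfInv α) = Finset.univ := by
        apply Finset.eq_univ_of_forall
        intro f
        simp only [fpfInv, Finset.mem_filter, Finset.mem_univ, true_and]
        exact ⟨fun p => isEmptyElim p, fun p => isEmptyElim p⟩
      rw [h1, Finset.card_univ, fpfCount]
      simp [hcard]
    | 1, hcard =>
      haveI : Subsingleton α := Fintype.card_le_one_iff_subsingleton.mp (by omega)
      have h1 : (fpfInv α) = ∅ := by
        apply Finset.eq_empty_of_forall_notMem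
        intro f hf
        simp only [fpfInv, Finset.mem_filter, Finset.mem_univ, true_and] at hf
        have ⟨x⟩ := Fintype.card_pos_iff.mp (by omega : 0 < Fintype.card α)
        exact hf.2 x (Subsingleton.elim _ _)
      rw [h1]; rfl
    | (k+2), hcard =>
      have ⟨x0⟩ := Fintype.card_pos_iff.mp (by omega : 0 < Fintype.card α)
      have key : (fpfInv α).card = ∑ y ∈ Finset.univ.erase x0,
          ((fpfInv α).filter (fun f => f x0 = y)).card := by
        apply Finset.card_eq_sum_card_fiberwise
        intro f hf
        simp only [Finset.mem_coe, fpfInv, Finset.mem_filter, Finset.mem_univ, true_and] at hf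
        exact Finset.mem_erase.mpr ⟨hf.2 x0, Finset.mem_univ _⟩
      have fiber : ∀ y ∈ Finset.univ.erase x0,
          ((fpfInv α).filter (fun f => f x0 = y)).card = fpfCount k := by
        intro y hy
        have hyx : y ≠ x0 := (Finset.mem_erase.mp hy).1
        have hsubcard : Fintype.card {z : α // z ≠ x0 ∧ z ≠ y} = k := by
          rw [Fintype.card_subtype]
          have h2 : Finset.univ.filter (fun z : α => z ≠ x0 ∧ z ≠ y)
              = Finset.univ \ {x0, y} := by
            ext z; simp
          have h3 : ({x0, y} : Finset α).card = 2 := by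
            rw [Finset.card_insert_of_notMem (by simp [Ne.symm hyx]),
              Finset.card_singleton]
          rw [h2, Finset.card_sdiff_of_subset (by simp), Finset.card_univ, hcard, h3]
          exact Nat.add_sub_cancel k 2
        rw [fiber_step x0 y hyx]
        exact ih k (Nat.lt_succ_of_lt k.lt_succ_self) {z : α // z ≠ x0 ∧ z ≠ y} hsubcard
      rw [key, Finset.sum_congr rfl fiber, Finset.sum_const, Finset.card_erase_of_mem
        (Finset.mem_univ _), Finset.card_univ, hcard]
      show (k + 2 - 1) * fpfCount k = fpfCount (k + 2)
      rfl

lemma fpfCount_real (t : ℕ) :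
    (fpfCount (2 * t) : ℝ) = ((2 * t).factorial : ℝ) / ((2 : ℝ) ^ t * (t.factorial : ℝ)) := by
  induction t with
  | zero => simp [fpfCount]
  | succ t ih =>
    have h2 : 2 * (t + 1) = (2 * t) + 2 := by ring
    rw [h2]
    show ((((2*t) + 1) * fpfCount (2*t) : ℕ) : ℝ) = _
    push_cast [ih]
    have hf : ((2 * t + 2).factorial : ℝ) = (2*t+2) * ((2*t+1) * ((2*t).factorial : ℝ)) := by
      rw [show (2*t+2) = (2*t+1)+1 by ring, Nat.factorial_succ]
      push_cast
      rw [Nat.factorial_succ]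
      push_cast; ring
    rw [hf, Nat.factorial_succ]
    have h2t : ((2:ℝ)^t) ≠ 0 := by positivity
    have htf : ((t.factorial : ℝ)) ≠ 0 := Nat.cast_ne_zero.mpr t.factorial_ne_zero
    field_simp
    push_cast; ring

def resSet (X : Type) [Fintype X] [DecidableEq X] (P : X → Prop) [DecidablePred P] :
    Finset (X → X) :=
  Finset.univ.filter (fun f =>
    (∀ p, f (f p) = p) ∧ (∀ p, f p ≠ p) ∧ (∀ p, P p → ¬ P (f p)))

variable {X : Type} [Fintype X] [DecidableEq X] {P : X → Prop} [DecidablePred P]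

lemma card_compl (g : {x // P x} → {x // ¬ P x}) (hg : Function.Injective g) :
    Fintype.card {q : {x // ¬ P x} // ∀ x, g x ≠ q}
      = Fintype.card {x // ¬ P x} - Fintype.card {x // P x} := by
  rw [Fintype.card_subtype]
  have h1 : Finset.univ.filter (fun q : {x // ¬ P x} => ∀ x, g x ≠ q)
      = Finset.univ \ Finset.univ.image g := by
    ext q
    simp [eq_comm]
  rw [h1, Finset.card_sdiff_of_subset (Finset.subset_univ _), Finset.card_univ,
    Finset.card_image_of_injective _ hg, Finset.card_univ]

lemma fiber_card (g : {x // P x} → {x // ¬ P x}) (hg : Function.Injective g) :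
    ((resSet X P).filter (fun f => ∀ x : {x // P x}, f x.1 = (g x).1)).card
      = (fpfInv {q : {x // ¬ P x} // ∀ x, g x ≠ q}).card := by
  apply Finset.card_bij'
    (i := fun f hf => fun q : {q : {x // ¬ P x} // ∀ x, g x ≠ q} =>
      (⟨⟨f q.1.1, by
        simp only [resSet, Finset.filter_filter, Finset.mem_filter, Finset.mem_univ,
          true_and] at hf
        obtain ⟨⟨hinv, hfpf, hres⟩, hf2⟩ := hf
        intro hP
        have h3 := hf2 ⟨f q.1.1, hP⟩
        rw [hinv] at h3
        exact q.2 ⟨f q.1.1, hP⟩ (Subtype.ext h3.symm)⟩, by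
        simp only [resSet, Finset.filter_filter, Finset.mem_filter, Finset.mem_univ,
          true_and] at hf
        obtain ⟨⟨hinv, hfpf, hres⟩, hf2⟩ := hf
        intro x hx
        have h1 : (g x).1 = f q.1.1 := congrArg Subtype.val hx
        have h2 : f x.1 = f q.1.1 := (hf2 x).trans h1
        have h3 := congrArg f h2
        rw [hinv, hinv] at h3
        exact q.1.2 (h3 ▸ x.2)⟩ :
      {q : {x // ¬ P x} // ∀ x, g x ≠ q}))
    (j := fun h hh => fun p : X =>
      if hp : P p then (g ⟨p, hp⟩).1
      else if hq : ∃ x : {x // P x}, (g x).1 = p then hq.choose.1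
      else (h ⟨⟨p, hp⟩, fun x hx => hq ⟨x, congrArg Subtype.val hx⟩⟩).1.1)
  case hi =>
    intro f hf
    simp only [resSet, Finset.filter_filter, Finset.mem_filter, Finset.mem_univ,
      true_and] at hf
    obtain ⟨⟨hinv, hfpf, hres⟩, hf2⟩ := hf
    simp only [fpfInv, Finset.mem_filter, Finset.mem_univ, true_and]
    constructor
    · intro q
      exact Subtype.ext (Subtype.ext (hinv q.1.1))
    · intro q hq
      exact hfpf q.1.1 (congrArg Subtype.val (congrArg Subtype.val hq))
  case hj =>
    intro h hh
    simp only [fpfInv, Finset.mem_filter, Finset.mem_univ, true_and] at hh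
    obtain ⟨hinv, hfpf⟩ := hh
    simp only [resSet, Finset.filter_filter, Finset.mem_filter, Finset.mem_univ, true_and]
    refine ⟨⟨?_, ?_, ?_⟩, ?_⟩
    · -- involution
      intro p
      split_ifs with h1 h2 h3 h4 h5 h6 h7 h8
      · exact absurd h2 (g ⟨p, h1⟩).2
      · exact congrArg Subtype.val (hg (Subtype.ext h3.choose_spec))
      · exact absurd ⟨⟨p, h1⟩, rfl⟩ h3
      · exact h4.choose_spec
      · exact absurd h4.choose.2 h5
      · exact absurd h4.choose.2 h5
      · exact absurd h7 (h ⟨⟨p, h1⟩, fun x hx => h4 ⟨x, congrArg Subtype.val hx⟩⟩).1.2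
      · obtain ⟨x, hx⟩ := h8
        exact absurd (Subtype.ext hx)
          ((h ⟨⟨p, h1⟩, fun x hx => h4 ⟨x, congrArg Subtype.val hx⟩⟩).2 x)
      · exact congrArg (fun w => w.1.1)
          (hinv ⟨⟨p, h1⟩, fun x hx => h4 ⟨x, congrArg Subtype.val hx⟩⟩)
    · -- fixed point free
      intro p
      split_ifs with h1 h2
      · exact fun hc => (g ⟨p, h1⟩).2 (by rw [hc]; exact h1)
      · exact fun hc => h1 (hc ▸ h2.choose.2)
      · exact fun hc => hfpf ⟨⟨p, h1⟩, fun x hx => h2 ⟨x, congrArg Subtype.val hx⟩⟩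
          (Subtype.ext (Subtype.ext hc))
    · -- restriction
      intro p hp
      split_ifs
      exact (g ⟨p, hp⟩).2
    · -- eval
      exact fun x => (dif_pos x.2).symm ▸ rfl
  case left_inv =>
    intro f hf
    simp only [resSet, Finset.filter_filter, Finset.mem_filter, Finset.mem_univ,
      true_and] at hf
    obtain ⟨⟨hinv, hfpf, hres⟩, hf2⟩ := hf
    funext p
    show (if hp : P p then (g ⟨p, hp⟩).1
      else if hq : ∃ x : {x // P x}, (g x).1 = p then hq.choose.1
      else f p) = f p
    split_ifs with h1 h2
    · exact (hf2 ⟨p, h1⟩).symm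
    · have h5 := congrArg f (hf2 h2.choose)
      rw [hinv] at h5
      rw [h2.choose_spec] at h5
      exact h5
    · rfl
  case right_inv =>
    intro h hh
    funext q
    apply Subtype.ext
    apply Subtype.ext
    show (if hp : P q.1.1 then (g ⟨q.1.1, hp⟩).1
      else if hq : ∃ x : {x // P x}, (g x).1 = q.1.1 then hq.choose.1
      else (h ⟨⟨q.1.1, hp⟩, fun x hx => hq ⟨x, congrArg Subtype.val hx⟩⟩).1.1) = (h q).1.1
    split_ifs with h1 h2
    · exact absurd h1 q.1.2
    · exact absurd (Subtype.ext h2.choose_spec) (q.2 h2.choose)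
    · rfl


lemma card_resSet (X : Type) [Fintype X] [DecidableEq X] (P : X → Prop) [DecidablePred P] :
    (resSet X P).card =
      (Fintype.card {x // ¬ P x}).descFactorial (Fintype.card {x // P x})
        * fpfCount (Fintype.card {x // ¬ P x} - Fintype.card {x // P x}) := by
  by_cases hB : Nonempty {x // ¬ P x}
  · haveI : Inhabited {x // ¬ P x} := Classical.inhabited_of_nonempty hB
    set A := {x // P x}
    set B := {x // ¬ P x}
    have key : (resSet X P).card = ∑ g ∈ Finset.univ.filter
        (fun g : A → B => Function.Injective g),
        ((resSet X P).filter (fun f => (fun x : A =>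
          if h : ¬ P (f x.1) then (⟨f x.1, h⟩ : B) else default) = g)).card := by
      apply Finset.card_eq_sum_card_fiberwise
      intro f hf
      simp only [Finset.mem_coe, resSet, Finset.mem_filter, Finset.mem_univ, true_and] at hf
      obtain ⟨hinv, hfpf, hres⟩ := hf
      simp only [Finset.mem_coe, Finset.mem_filter, Finset.mem_univ, true_and]
      intro x y hxy
      have hx := congrArg Subtype.val hxy
      dsimp only at hx
      rw [dif_pos (hres x.1 x.2), dif_pos (hres y.1 y.2)] at hx
      have := congrArg f hx
      rw [hinv, hinv] at this
      exact Subtype.ext this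
    rw [key]
    have step : ∀ g ∈ Finset.univ.filter (fun g : A → B => Function.Injective g),
        ((resSet X P).filter (fun f => (fun x : A =>
          if h : ¬ P (f x.1) then (⟨f x.1, h⟩ : B) else default) = g)).card
        = fpfCount (Fintype.card B - Fintype.card A) := by
      intro g hg
      simp only [Finset.mem_filter, Finset.mem_univ, true_and] at hg
      have hfe : (resSet X P).filter (fun f => (fun x : A =>
            if h : ¬ P (f x.1) then (⟨f x.1, h⟩ : B) else default) = g)
          = (resSet X P).filter (fun f => ∀ x : A, f x.1 = (g x).1) := by
        apply Finset.filter_congr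
        intro f hf
        simp only [resSet, Finset.mem_filter, Finset.mem_univ, true_and] at hf
        obtain ⟨hinv, hfpf, hres⟩ := hf
        constructor
        · intro hΦ x
          have := congrArg (fun F => (F x).1) hΦ
          dsimp only at this
          rw [dif_pos (hres x.1 x.2)] at this
          exact this
        · intro hx
          funext x
          apply Subtype.ext
          show (if h : ¬ P (f x.1) then (⟨f x.1, h⟩ : B) else default).1 = (g x).1
          rw [dif_pos (hres x.1 x.2)]
          exact hx x
      rw [hfe, fiber_card g hg, card_fpfInv _ _ (card_compl g hg)]
    rw [Finset.sum_congr rfl step, Finset.sum_const, smul_eq_mul]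
    congr 1
    rw [← Fintype.card_subtype, Fintype.card_congr (Equiv.subtypeInjectiveEquivEmbedding A B),
      Fintype.card_embedding_eq]
  · haveI hBe : IsEmpty {x // ¬ P x} := not_nonempty_iff.mp hB
    have hBc : Fintype.card {x // ¬ P x} = 0 := Fintype.card_eq_zero
    by_cases hA : Nonempty {x // P x}
    · obtain ⟨a⟩ := hA
      have h0 : resSet X P = ∅ := by
        apply Finset.eq_empty_of_forall_notMem
        intro f hf
        simp only [resSet, Finset.mem_filter, Finset.mem_univ, true_and] at hf
        exact hBe.false (⟨f a.1, hf.2.2 a.1 a.2⟩ : {x // ¬ P x})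
      have hAc : 0 < Fintype.card {x // P x} := Fintype.card_pos_iff.mpr ⟨a⟩
      rw [h0, Finset.card_empty, hBc,
        Nat.descFactorial_eq_zero_iff_lt.mpr hAc, Nat.zero_mul]
    · haveI hAe : IsEmpty {x // P x} := not_nonempty_iff.mp hA
      haveI : IsEmpty X := by
        constructor
        intro x
        by_cases hx : P x
        · exact hAe.false ⟨x, hx⟩
        · exact hBe.false ⟨x, hx⟩
      have hAc : Fintype.card {x // P x} = 0 := Fintype.card_eq_zero
      have h1 : resSet X P = Finset.univ := by
        apply Finset.eq_univ_of_forall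
        intro f
        simp only [resSet, Finset.mem_filter, Finset.mem_univ, true_and]
        exact ⟨fun p => isEmptyElim p, fun p => isEmptyElim p, fun p => isEmptyElim p⟩
      rw [h1, Finset.card_univ, hAc, hBc]
      simp [fpfCount, Fintype.card_eq_zero (α := X)]


lemma card_pt_s18 (n : ℕ) (d : Fin n → ℕ) (Q : Fin n → Prop) [DecidablePred Q] :
    Fintype.card {p : Pt n d // Q p.1} = ∑ i ∈ Finset.univ.filter Q, d i := by
  have e : {p : Pt n d // Q p.1} ≃ Σ i : {i // Q i}, Fin (d i.1) :=
    { toFun := fun p => ⟨⟨p.1.1, p.2⟩, p.1.2⟩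
      invFun := fun q => ⟨⟨q.1.1, q.2⟩, q.1.2⟩
      left_inv := fun p => rfl
      right_inv := fun q => rfl }
  rw [Fintype.card_congr e, Fintype.card_sigma]
  simp only [Fintype.card_fin]
  exact (Finset.sum_subtype _ (by simp) d).symm


/-- the total number of restricted pairings is
`[M₁(R)]_{M₁(L)} · (M₁(R) - M₁(L))! / (2^t · t!)`. -/
theorem count_restricted_pairings
    (n : ℕ) (d : Fin n → ℕ) (L R : Finset (Fin n))
    (hdis : Disjoint L R) (hun : L ∪ R = Finset.univ)
    (heven : Even (M n d)) (hlr : M1 d L ≤ M1 d R) :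
    ((restricted n d L).card : ℝ) =
      ((M1 d R).descFactorial (M1 d L) : ℝ) * ((M1 d R - M1 d L).factorial : ℝ) /
        ((2 : ℝ) ^ (tP d L R) * ((tP d L R).factorial : ℝ)) := by
  classical
  have hres : restricted n d L = resSet (Pt n d) (fun p => p.1 ∈ L) := by
    ext f; simp [restricted, resSet]
  have hA : Fintype.card {p : Pt n d // p.1 ∈ L} = M1 d L := by
    rw [card_pt_s18 n d (fun i => i ∈ L)]
    have h1 : Finset.univ.filter (fun i : Fin n => i ∈ L) = L := by ext i; simp
    rw [h1]; rfl
  have hB : Fintype.card {p : Pt n d // ¬ p.1 ∈ L} = M1 d R := by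
    rw [card_pt_s18 n d (fun i => ¬ i ∈ L)]
    have h1 : Finset.univ.filter (fun i : Fin n => ¬ i ∈ L) = R := by
      ext i
      simp only [Finset.mem_filter, Finset.mem_univ, true_and]
      constructor
      · intro hiL
        have : i ∈ L ∪ R := hun ▸ Finset.mem_univ i
        rcases Finset.mem_union.mp this with h | h
        · exact absurd h hiL
        · exact h
      · intro hiR hiL
        exact Finset.disjoint_left.mp hdis hiL hiR
    rw [h1]; rfl
  have hM : M n d = M1 d L + M1 d R := by
    rw [M, ← hun, Finset.sum_union hdis]; rfl
  have hev2 : Even (M1 d R - M1 d L) := by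
    rw [hM] at heven
    exact (Nat.even_sub hlr).mpr (Nat.even_add.mp heven).symm
  have htp : 2 * tP d L R = M1 d R - M1 d L := Nat.mul_div_cancel' hev2.two_dvd
  have hkey := card_resSet (Pt n d) (fun p => p.1 ∈ L)
  rw [hA, hB] at hkey
  rw [hres, hkey]
  push_cast
  rw [← htp, fpfCount_real]
  ring


end RandomBGraph
end
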